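/- Let m ≥ 1 be an integer, α, λ ∈ ℂ with α ≠ 0, λ ≠ 0, and let f : ℤ → ℂ satisfy f(n) ≠ α for all n. Define μ = α^m/λ^m − λ/α, and the operators acting on functions ψ : ℤ → ℂ: (L̃ψ)(n) = ψ(n−1) − ũ(n)·ψ(n+m) where ũ(n) = (f(n+m) − α)·∏_{s=0}^{m−1} f(n+s); (Aψ)(n) = (1/(f(n) − α))·((α/λ)·ψ(n−1) − f(n)·ψ(n)); (Y^k ψ)(n) = (λ/α)^k·(∏_{t=0}^{k−1} f(n+t))·ψ(n+k) for k ≥ 0; and (Bψ)(n) = (λ/α)·ψ(n) + (α/λ)^{m−1}·(f(n) − α)·Σ_{k=0}^{m−1} (Y^k ψ)(n+1). Then for every function ψ : ℤ → ℂ and every n ∈ ℤ, ((f − α)·A((1/(f − α))·B((f − α)·ψ)))(n) = (L̃ψ)(n) − λ·ψ(n) + μ·(f(n) − α)·ψ(n), where products of a function of n with ψ are pointwise. -/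

import Mathlib

set_option maxHeartbeats 1000000 in
/-- The second operator identity `(f-α) A (1/(f-α)) B (f-α) = L̃ - λ + μ (f-α)` used in
the proof of the Darboux transformation for the Bogoyavlensky lattice. -/
theorem bogoyavlensky_operator_identity_second
    (m : ℕ) (hm : 1 ≤ m) (α lam : ℂ) (hα : α ≠ 0) (hlam : lam ≠ 0)
    (f : ℤ → ℂ) (hf : ∀ n : ℤ, f n ≠ α)
    (μ : ℂ) (hμ : μ = α ^ m / lam ^ m - lam / α)
    (u' : ℤ → ℂ)
    (hu' : ∀ n : ℤ, u' n = (f (n + m) - α) * ∏ s ∈ Finset.range m, f (n + s))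
    (L' A B : (ℤ → ℂ) → (ℤ → ℂ))
    (Y : ℕ → (ℤ → ℂ) → (ℤ → ℂ))
    (hL' : ∀ (ψ : ℤ → ℂ) (n : ℤ), L' ψ n = ψ (n - 1) - u' n * ψ (n + m))
    (hA : ∀ (ψ : ℤ → ℂ) (n : ℤ),
      A ψ n = (1 / (f n - α)) * ((α / lam) * ψ (n - 1) - f n * ψ n))
    (hY : ∀ (k : ℕ) (ψ : ℤ → ℂ) (n : ℤ),
      Y k ψ n = (lam / α) ^ k * (∏ t ∈ Finset.range k, f (n + t)) * ψ (n + k))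
    (hB : ∀ (ψ : ℤ → ℂ) (n : ℤ),
      B ψ n = (lam / α) * ψ n
        + (α / lam) ^ (m - 1) * (f n - α) * ∑ k ∈ Finset.range m, Y k ψ (n + 1)) :
    ∀ (ψ : ℤ → ℂ) (n : ℤ),
      (f n - α) *
          A (fun j => (1 / (f j - α)) * B (fun i => (f i - α) * ψ i) j) n
        = L' ψ n - lam * ψ n + μ * (f n - α) * ψ n := by
  intro ψ n
  obtain ⟨m', rfl⟩ : ∃ k, m = k + 1 := ⟨m - 1, by omega⟩
  have hfn := sub_ne_zero.mpr (hf n)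
  have hfn1 := sub_ne_zero.mpr (hf (n-1))
  have hn : n - 1 + 1 = n := by ring
  simp only [hA, hB, hY, hL', hu', hμ, hn, Nat.add_sub_cancel]
  -- abbreviation for the telescoping term
  set g : ℕ → ℂ := fun k =>
    ((lam / α) ^ k * ∏ t ∈ Finset.range k, f (n + (t : ℤ))) * ((f (n + (k : ℤ)) - α) * ψ (n + (k : ℤ))) with hg
  -- key telescoping identity
  have key : f n * (∑ x ∈ Finset.range (m' + 1),
        ((lam / α) ^ x * ∏ t ∈ Finset.range x, f (n + 1 + (t : ℤ))) *
          ((f (n + 1 + (x : ℤ)) - α) * ψ (n + 1 + (x : ℤ))))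
      = (α / lam) * ((∑ x ∈ Finset.range (m' + 1), g x) + g (m' + 1) - g 0) := by
    have hterm : ∀ k ∈ Finset.range (m' + 1),
        f n * (((lam / α) ^ k * ∏ t ∈ Finset.range k, f (n + 1 + (t : ℤ))) *
          ((f (n + 1 + (k : ℤ)) - α) * ψ (n + 1 + (k : ℤ)))) = (α / lam) * g (k + 1) := by
      intro k _
      have hp : ∏ t ∈ Finset.range (k + 1), f (n + (t : ℤ))
          = (∏ t ∈ Finset.range k, f (n + 1 + (t : ℤ))) * f n := by
        rw [Finset.prod_range_succ']
        congr 1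
        · exact Finset.prod_congr rfl fun t _ => by push_cast; ring_nf
        · simp
      have hk : (n : ℤ) + ((k : ℤ) + 1) = n + 1 + k := by ring
      simp only [hg, hp]
      push_cast
      rw [hk]
      have h1 : α / lam * (lam / α) = 1 := by
        rw [div_mul_div_comm, mul_comm α lam, div_self (mul_ne_zero hlam hα)]
      rw [pow_succ]
      linear_combination (-(f n) * (lam / α) ^ k * (∏ t ∈ Finset.range k, f (n + 1 + (t : ℤ))) *
        ((f (n + 1 + (k : ℤ)) - α) * ψ (n + 1 + (k : ℤ)))) * h1
    rw [Finset.mul_sum, Finset.sum_congr rfl hterm, ← Finset.mul_sum]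
    congr 1
    have h1 : (∑ k ∈ Finset.range (m' + 1), g (k + 1)) + g 0
        = (∑ k ∈ Finset.range (m' + 1), g k) + g (m' + 1) := by
      rw [← Finset.sum_range_succ', Finset.sum_range_succ]
    exact eq_sub_of_add_eq h1
  -- simplify the two inner divisions
  have e1 : (1 : ℂ) / (f (n - 1) - α) *
        (lam / α * ((f (n - 1) - α) * ψ (n - 1)) +
          (α / lam) ^ m' * (f (n - 1) - α) *
            ∑ x ∈ Finset.range (m' + 1),
              ((lam / α) ^ x * ∏ x ∈ Finset.range x, f (n + (x : ℤ))) *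
                ((f (n + (x : ℤ)) - α) * ψ (n + (x : ℤ))))
      = lam / α * ψ (n - 1) +
          (α / lam) ^ m' *
            ∑ x ∈ Finset.range (m' + 1),
              ((lam / α) ^ x * ∏ x ∈ Finset.range x, f (n + (x : ℤ))) *
                ((f (n + (x : ℤ)) - α) * ψ (n + (x : ℤ))) := by
    field_simp
  have e2 : (1 : ℂ) / (f n - α) *
        (lam / α * ((f n - α) * ψ n) +
          (α / lam) ^ m' * (f n - α) *
            ∑ x ∈ Finset.range (m' + 1),
              ((lam / α) ^ x * ∏ t ∈ Finset.range x, f (n + 1 + (t : ℤ))) *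
                ((f (n + 1 + (x : ℤ)) - α) * ψ (n + 1 + (x : ℤ))))
      = lam / α * ψ n +
          (α / lam) ^ m' *
            ∑ x ∈ Finset.range (m' + 1),
              ((lam / α) ^ x * ∏ t ∈ Finset.range x, f (n + 1 + (t : ℤ))) *
                ((f (n + 1 + (x : ℤ)) - α) * ψ (n + 1 + (x : ℤ))) := by
    field_simp
  rw [e1, e2, ← mul_assoc, mul_one_div_cancel hfn, one_mul]
  simp only [hg, Nat.cast_zero, Nat.cast_add, Nat.cast_one, add_zero, pow_zero,
    Finset.range_zero, Finset.prod_empty, one_mul, mul_one] at key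
  field_simp at key ⊢
  have hB0 : lam * (α * lam ^ m') * (α * lam ^ m') ≠ 0 := by
    have h := pow_ne_zero m' hlam
    exact mul_ne_zero (mul_ne_zero hlam (mul_ne_zero hα h)) (mul_ne_zero hα h)
  have hc : (α / lam) ^ m' * lam ^ m' = α ^ m' := by
    rw [div_pow, div_mul_cancel₀ _ (pow_ne_zero _ hlam)]
  have hd : (lam / α) ^ (m' + 1) * α ^ (m' + 1) = lam ^ (m' + 1) := by
    rw [div_pow, div_mul_cancel₀ _ (pow_ne_zero _ hα)]
  push_cast at key ⊢
  linear_combination (-α * (α / lam) ^ m' * lam ^ (m' + 1)) * key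
    + (α ^ 2 * lam * ((f n - α) * ψ n) - α ^ 2 * lam * (lam / α) ^ (m' + 1) *
        ((∏ t ∈ Finset.range (m' + 1), f (n + ↑t)) * (f (n + ((m' : ℤ) + 1)) - α) *
          ψ (n + ((m' : ℤ) + 1)))) * hc
    + (-α * lam * ((∏ t ∈ Finset.range (m' + 1), f (n + ↑t)) * (f (n + ((m' : ℤ) + 1)) - α) *
          ψ (n + ((m' : ℤ) + 1)))) * hd
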